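/- Let G be a connected non-bipartite graph and let c_1 − c_2 − ... − c_{2q+1} − c_1 be an odd closed walk spanning V (so that E({c_1,...,c_{2q+1}}) = V). Then the word z obtained by concatenating the cycle word c_1 c_2 ... c_{2q+1} four times is a strong erasing word for (G, LCFM): every even-length right sub-word of z is completely matchable, and Q_LCFM(i j z) = ∅ for every pair of non-adjacent vertices i, j. -/

import Mathlib

set_option linter.unusedSectionVars false

variable {V : Type*} [Fintype V] [DecidableEq V]

/-- One step of Last Come, First Matched. -/
def lcfmStep (G : SimpleGraph V) [DecidableRel G.Adj] (w : List V) (v : V) : List V :=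
  match w.reverse.findIdx? (fun u => decide (G.Adj u v)) with
  | some k => (w.reverse.eraseIdx k).reverse
  | none => w ++ [v]

/-- Buffer content after processing `z` under LCFM from an empty system. -/
def lcfmQ (G : SimpleGraph V) [DecidableRel G.Adj] (z : List V) : List V :=
  z.foldl (lcfmStep G) []

/-- The word of one period of the closed walk `c` of length `2q+1`. -/
def cycleWord (q : ℕ) (c : ℕ → V) : List V :=
  List.ofFn (fun t : Fin (2 * q + 1) => c t)

section Aux

variable (G : SimpleGraph V) [DecidableRel G.Adj]

lemma lcfmStep_nil (v : V) : lcfmStep G [] v = [v] := by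
  simp [lcfmStep]

lemma lcfmStep_one_adj {u v : V} (h : G.Adj u v) : lcfmStep G [u] v = [] := by
  simp [lcfmStep, List.findIdx?, List.findIdx?.go, h]

lemma lcfmStep_one_nadj {u v : V} (h : ¬ G.Adj u v) : lcfmStep G [u] v = [u, v] := by
  simp [lcfmStep, List.findIdx?, List.findIdx?.go, h]

lemma lcfmStep_two_adj {a b v : V} (h : G.Adj b v) : lcfmStep G [a, b] v = [a] := by
  simp [lcfmStep, List.findIdx?, List.findIdx?.go, h]

lemma lcfmStep_two_adj' {a b v : V} (h1 : ¬ G.Adj b v) (h2 : G.Adj a v) :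
    lcfmStep G [a, b] v = [b] := by
  simp [lcfmStep, List.findIdx?, List.findIdx?.go, h1, h2]

lemma lcfmStep_two_nadj {a b v : V} (h1 : ¬ G.Adj b v) (h2 : ¬ G.Adj a v) :
    lcfmStep G [a, b] v = [a, b, v] := by
  simp [lcfmStep, List.findIdx?, List.findIdx?.go, h1, h2]

lemma lcfmStep_three_adj {a b x v : V} (h : G.Adj x v) : lcfmStep G [a, b, x] v = [a, b] := by
  simp [lcfmStep, List.findIdx?, List.findIdx?.go, h]

/-- Processing a list from a given buffer. -/
def lcfmRun (b : List V) (z : List V) : List V := z.foldl (lcfmStep G) b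

lemma lcfmRun_cons (b : List V) (v : V) (z : List V) :
    lcfmRun G b (v :: z) = lcfmRun G (lcfmStep G b v) z := rfl

variable {q : ℕ} {c : ℕ → V}

/-- The walk word from position `m`, of length `n`. -/
def walkWord (c : ℕ → V) (m n : ℕ) : List V := (List.range' m n).map c

lemma walkWord_succ (m n : ℕ) : walkWord c m (n + 1) = c m :: walkWord c (m + 1) n := rfl

lemma walkWord_cat : ∀ (n m k : ℕ),
    walkWord c m (n + k) = walkWord c m n ++ walkWord c (m + n) k := by
  intro n
  induction n with
  | zero => intro m k; simp [walkWord]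
  | succ n ih =>
    intro m k
    rw [show n + 1 + k = (n + k) + 1 by omega, walkWord_succ, walkWord_succ, ih (m + 1) k,
      show m + 1 + n = m + (n + 1) by omega]
    rfl

section Runs

variable (hadj : ∀ k : ℕ, G.Adj (c k) (c (k + 1)))

include hadj

/-- From an empty buffer an even walk word clears. -/
lemma run0 : ∀ n m, lcfmRun G [] (walkWord c m (2 * n)) = [] := by
  intro n
  induction n with
  | zero => intro m; rfl
  | succ n ih =>
    intro m
    have h2 : 2 * (n + 1) = (2 * n) + 1 + 1 := by ring
    rw [h2, walkWord_succ, walkWord_succ, lcfmRun_cons, lcfmRun_cons, lcfmStep_nil,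
      lcfmStep_one_adj G (hadj m)]
    exact ih (m + 2)

/-- From a one-element buffer, an odd walk word containing an even-offset match clears. -/
lemma run1 : ∀ u n m (x : V), u % 2 = 0 → u < n → n % 2 = 1 → G.Adj x (c (m + u)) →
    lcfmRun G [x] (walkWord c m n) = [] := by
  intro u
  induction u using Nat.strong_induction_on with
  | _ u ih =>
    intro n m x hu hun hn hx
    obtain ⟨n', rfl⟩ : ∃ n', n = n' + 1 := ⟨n - 1, by omega⟩
    rw [walkWord_succ, lcfmRun_cons]
    by_cases hxm : G.Adj x (c m)
    · rw [lcfmStep_one_adj G hxm]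
      obtain ⟨k, rfl⟩ : ∃ k, n' = 2 * k := ⟨n' / 2, by omega⟩
      exact run0 G hadj k (m + 1)
    · have hu0 : u ≠ 0 := by rintro rfl; exact hxm (by simpa using hx)
      obtain ⟨n'', rfl⟩ : ∃ k, n' = k + 1 := ⟨n' - 1, by omega⟩
      rw [lcfmStep_one_nadj G hxm, walkWord_succ, lcfmRun_cons,
        lcfmStep_two_adj G (hadj m)]
      have heq : m + u = m + 2 + (u - 2) := by omega
      exact ih (u - 2) (by omega) n'' (m + 2) x (by omega) (by omega) (by omega)
        (by rw [← heq]; exact hx)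

/-- From a two-element buffer, a long enough even walk word clears, provided every
vertex has even-offset matches in every window of length `4q+2` of the walk. -/
lemma run2 (hwin : ∀ (v : V) (m : ℕ), ∃ t, t % 2 = 0 ∧ t < 4 * q + 2 ∧ G.Adj v (c (m + t))) :
    ∀ u n m (a b : V), u % 2 = 0 → (G.Adj b (c (m + u)) ∨ G.Adj a (c (m + u))) →
      u + 4 * q + 4 ≤ n → n % 2 = 0 →
      lcfmRun G [a, b] (walkWord c m n) = [] := by
  intro u
  induction u using Nat.strong_induction_on with
  | _ u ih =>
    intro n m a b hu hmatch hun hn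
    obtain ⟨n', rfl⟩ : ∃ k, n = k + 1 := ⟨n - 1, by omega⟩
    rw [walkWord_succ, lcfmRun_cons]
    by_cases hb : G.Adj b (c m)
    · rw [lcfmStep_two_adj G hb]
      obtain ⟨t, ht0, htlt, hta⟩ := hwin a (m + 1)
      exact run1 G hadj t n' (m + 1) a ht0 (by omega) (by omega) hta
    · by_cases ha : G.Adj a (c m)
      · rw [lcfmStep_two_adj' G hb ha]
        obtain ⟨t, ht0, htlt, htb⟩ := hwin b (m + 1)
        exact run1 G hadj t n' (m + 1) b ht0 (by omega) (by omega) htb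
      · have hu0 : u ≠ 0 := by
          rintro rfl
          simp only [Nat.add_zero] at hmatch
          rcases hmatch with h | h
          · exact hb h
          · exact ha h
        obtain ⟨n'', rfl⟩ : ∃ k, n' = k + 1 := ⟨n' - 1, by omega⟩
        rw [lcfmStep_two_nadj G hb ha, walkWord_succ, lcfmRun_cons,
          lcfmStep_three_adj G (hadj m)]
        have heq : m + u = m + 2 + (u - 2) := by omega
        refine ih (u - 2) (by omega) n'' (m + 2) a b (by omega) ?_ (by omega) (by omega)
        rw [← heq]; exact hmatch

end Runs

end Aux

section Periodic

variable {q : ℕ} {c : ℕ → V}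

lemma walkWord_shift (hper : ∀ k : ℕ, c (k + (2 * q + 1)) = c k) :
    ∀ n m, walkWord c (m + (2 * q + 1)) n = walkWord c m n := by
  intro n
  induction n with
  | zero => intro m; rfl
  | succ n ih =>
    intro m
    rw [walkWord_succ, walkWord_succ, hper m]
    have : m + (2 * q + 1) + 1 = (m + 1) + (2 * q + 1) := by omega
    rw [this, ih (m + 1)]

lemma cycleWord_eq_walkWord : cycleWord q c = walkWord c 0 (2 * q + 1) := by
  rw [cycleWord, walkWord, List.ofFn_eq_map, ← List.range_eq_range']
  exact List.ext_getElem (by simp) (by simp)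

lemma fourfold_eq_walkWord (hper : ∀ k : ℕ, c (k + (2 * q + 1)) = c k) :
    cycleWord q c ++ cycleWord q c ++ cycleWord q c ++ cycleWord q c
      = walkWord c 0 (4 * (2 * q + 1)) := by
  have hs : ∀ m n : ℕ, walkWord c (m + (2 * q + 1)) n = walkWord c m n :=
    fun m n => walkWord_shift hper n m
  have c1 : walkWord c 0 (4 * (2 * q + 1))
      = walkWord c 0 ((2 * q + 1) + ((2 * q + 1) + ((2 * q + 1) + (2 * q + 1)))) := by
    congr 1; ring
  have c2 := walkWord_cat (c := c) (2 * q + 1) 0 ((2 * q + 1) + ((2 * q + 1) + (2 * q + 1)))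
  have c3 := walkWord_cat (c := c) (2 * q + 1) (0 + (2 * q + 1)) ((2 * q + 1) + (2 * q + 1))
  have c4 := walkWord_cat (c := c) (2 * q + 1) (0 + (2 * q + 1) + (2 * q + 1)) (2 * q + 1)
  rw [c1, c2, c3, c4]
  simp only [hs]
  simp [cycleWord_eq_walkWord, List.append_assoc]

/-- Window lemma: every vertex has an even-offset neighbour on the walk within any
window of length `4q+2`. -/
lemma window (G : SimpleGraph V) [DecidableRel G.Adj]
    (hper : ∀ k : ℕ, c (k + (2 * q + 1)) = c k)
    (hspan : ∀ v : V, ∃ k < 2 * q + 1, G.Adj (c k) v) :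
    ∀ (v : V) (m : ℕ), ∃ t, t % 2 = 0 ∧ t < 4 * q + 2 ∧ G.Adj v (c (m + t)) := by
  intro v m
  obtain ⟨k, hk, hkv⟩ := hspan v
  have hper' : ∀ (b a : ℕ), c (a + (2 * q + 1) * b) = c a := by
    intro b
    induction b with
    | zero => intro a; simp
    | succ b ih =>
      intro a
      rw [show a + (2 * q + 1) * (b + 1) = (a + (2 * q + 1) * b) + (2 * q + 1) from by ring,
        hper, ih]
  obtain ⟨M, r, hM, hr⟩ : ∃ M r, m = (2 * q + 1) * M + r ∧ r < 2 * q + 1 :=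
    ⟨m / (2 * q + 1), m % (2 * q + 1), (Nat.div_add_mod m (2 * q + 1)).symm,
      Nat.mod_lt m (by omega)⟩
  subst hM
  have hct1 : c ((2 * q + 1) * M + r + (k + (2 * q + 1) - r)) = c k := by
    have hsum : r + (k + (2 * q + 1) - r) = k + (2 * q + 1) := by omega
    have h1 : (2 * q + 1) * M + r + (k + (2 * q + 1) - r)
        = (k + (2 * q + 1)) + (2 * q + 1) * M := by
      calc (2 * q + 1) * M + r + (k + (2 * q + 1) - r)
          = (2 * q + 1) * M + (r + (k + (2 * q + 1) - r)) := add_assoc _ _ _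
        _ = (2 * q + 1) * M + (k + (2 * q + 1)) := by rw [hsum]
        _ = (k + (2 * q + 1)) + (2 * q + 1) * M := add_comm _ _
    rw [h1, hper' M, hper]
  set m := (2 * q + 1) * M + r with hm
  set t1 := k + (2 * q + 1) - r with ht1
  have ht1range : 1 ≤ t1 ∧ t1 ≤ 4 * q + 1 := by omega
  by_cases hp : t1 % 2 = 0
  · exact ⟨t1, hp, by omega, by rw [hct1]; exact hkv.symm⟩
  · by_cases hlt : t1 < 2 * q + 1
    · refine ⟨t1 + (2 * q + 1), by omega, by omega, ?_⟩
      rw [show m + (t1 + (2 * q + 1)) = (m + t1) + (2 * q + 1) from by ring, hper, hct1]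
      exact hkv.symm
    · refine ⟨t1 - (2 * q + 1), by omega, by omega, ?_⟩
      rw [show m + t1 = (m + (t1 - (2 * q + 1))) + (2 * q + 1) from by omega, hper] at hct1
      rw [hct1]
      exact hkv.symm

end Periodic

lemma walkWord_drop {c : ℕ → V} :
    ∀ (n m k : ℕ), (walkWord c m n).drop k = walkWord c (m + k) (n - k) := by
  intro n
  induction n with
  | zero => intro m k; simp [walkWord]
  | succ n ih =>
    intro m k
    cases k with
    | zero => simp [walkWord]
    | succ k =>
      rw [walkWord_succ, List.drop_succ_cons, ih (m + 1) k,
        show m + 1 + k = m + (k + 1) from by omega,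
        show n - k = n + 1 - (k + 1) from by omega]

/-- If `c_0 − c_1 − ⋯ − c_{2q}` is an odd closed walk of a connected non-bipartite
graph spanning `V` in the sense that every vertex is adjacent to some `c_k`, then the
fourfold repetition `z` of the cycle word is a strong erasing word for `(G, LCFM)`:
every even-length right sub-word of `z` is completely matchable, and
`Q_LCFM(i j z) = ∅` for every pair of non-adjacent vertices `i, j`. -/
theorem lcfm_strong_erasing_word (G : SimpleGraph V) [DecidableRel G.Adj]
    (hconn : G.Connected) (hnb : ¬ G.Colorable 2)
    (q : ℕ) (c : ℕ → V)
    (hadj : ∀ k : ℕ, G.Adj (c k) (c (k + 1)))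
    (hper : ∀ k : ℕ, c (k + (2 * q + 1)) = c k)
    (hspan : ∀ v : V, ∃ k < 2 * q + 1, G.Adj (c k) v) :
    (∀ k : ℕ, Even k →
        lcfmQ G (((cycleWord q c ++ cycleWord q c ++ cycleWord q c ++ cycleWord q c)).drop k)
          = []) ∧
      ∀ i j : V, ¬ G.Adj i j →
        lcfmQ G (i :: j ::
          (cycleWord q c ++ cycleWord q c ++ cycleWord q c ++ cycleWord q c)) = [] := by
  have hz := fourfold_eq_walkWord (q := q) (c := c) hper
  constructor
  · intro k hk
    rw [hz, walkWord_drop]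
    obtain ⟨a, rfl⟩ := hk
    rw [show 4 * (2 * q + 1) - (a + a) = 2 * ((4 * (2 * q + 1) - (a + a)) / 2) from by omega]
    exact run0 G hadj _ _
  · intro i j hij
    rw [hz]
    show lcfmRun G [] (i :: j :: walkWord c 0 (4 * (2 * q + 1))) = []
    rw [lcfmRun_cons, lcfmStep_nil, lcfmRun_cons, lcfmStep_one_nadj G hij]
    obtain ⟨t, ht0, htlt, htj⟩ := window G hper hspan j 0
    exact run2 G hadj (window G hper hspan) t (4 * (2 * q + 1)) 0 i j ht0
      (Or.inl htj) (by omega) (by omega)
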